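/- Let f, g : ℝⁿ → ℝ be locally Lipschitz at x. Then the Clarke subdifferential of the product satisfies ∂_c(f·g)(x) ⊆ g(x)·∂_c f(x) + f(x)·∂_c g(x) + (a correction term that vanishes when f(x), g(x) ≥ 0); in particular, if f(x) ≥ 0 and g(x) ≥ 0 then ∂_c(fg)(x) ⊆ g(x)∂_c f(x) + f(x)∂_c g(x). -/

import Mathlib

open Filter Set Pointwise

noncomputable def clarkeDeriv {E : Type*} [NormedAddCommGroup E] [NormedSpace ℝ E]
    (f : E → ℝ) (x v : E) : ℝ :=
  Filter.limsup (fun p : E × ℝ => (f (p.1 + p.2 • v) - f p.1) / p.2)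
    ((nhds x) ×ˢ (nhdsWithin 0 (Set.Ioi 0)))

noncomputable def clarkeSubdiff {E : Type*} [NormedAddCommGroup E] [InnerProductSpace ℝ E]
    (f : E → ℝ) (x : E) : Set E :=
  {ξ | ∀ v, (inner ℝ ξ v : ℝ) ≤ clarkeDeriv f x v}

def whitneyCone {E : Type*} [NormedAddCommGroup E] [NormedSpace ℝ E]
    (A B : Set E) (p : E) : Set E :=
  {w | ∃ (x y : ℕ → E) (c : ℕ → ℝ), (∀ n, x n ∈ A) ∧ (∀ n, y n ∈ B) ∧ (∀ n, 0 < c n) ∧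
    Filter.Tendsto x Filter.atTop (nhds p) ∧ Filter.Tendsto y Filter.atTop (nhds p) ∧
    Filter.Tendsto (fun n => c n • (x n - y n)) Filter.atTop (nhds w)}

def epi {E : Type*} (f : E → ℝ) : Set (E × ℝ) := {p | f p.1 ≤ p.2}

section Aux

variable {E : Type*} [NormedAddCommGroup E] [NormedSpace ℝ E]

/-- The Clarke difference quotient. -/
noncomputable def cq (f : E → ℝ) (v : E) (p : E × ℝ) : ℝ :=
  (f (p.1 + p.2 • v) - f p.1) / p.2

lemma clarkeDeriv_eq (f : E → ℝ) (x v : E) :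
    clarkeDeriv f x v
      = Filter.limsup (cq f v) ((nhds x) ×ˢ (nhdsWithin 0 (Set.Ioi 0))) := rfl

/-- uniform bound on difference quotients from local Lipschitzness -/
lemma cq_bound (f : E → ℝ) (x : E)
    (hf : ∃ s ∈ nhds x, ∃ K : NNReal, LipschitzOnWith K f s) :
    ∃ K : ℝ, 0 ≤ K ∧ ∀ v : E, ∀ᶠ p in ((nhds x) ×ˢ (nhdsWithin (0:ℝ) (Set.Ioi 0))),
      |cq f v p| ≤ K * ‖v‖ := by
  obtain ⟨s, hs, K, hK⟩ := hf
  obtain ⟨ε, hε, hball⟩ := Metric.mem_nhds_iff.mp hs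
  refine ⟨K, K.coe_nonneg, fun v => ?_⟩
  set δ : ℝ := (ε / 2) / (‖v‖ + 1) with hδdef
  have hδ : 0 < δ := by positivity
  have h1 : Metric.ball x (ε / 2) ∈ nhds x := Metric.ball_mem_nhds x (by positivity)
  have h2 : Set.Ioo (0:ℝ) δ ∈ nhdsWithin (0:ℝ) (Set.Ioi 0) :=
    Ioo_mem_nhdsGT_of_mem ⟨le_refl 0, hδ⟩
  filter_upwards [Filter.prod_mem_prod h1 h2] with p hp
  obtain ⟨hy, ht0, htδ⟩ : dist p.1 x < ε / 2 ∧ 0 < p.2 ∧ p.2 < δ :=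
    ⟨Metric.mem_ball.mp hp.1, hp.2.1, hp.2.2⟩
  have hnv : ‖p.2 • v‖ = p.2 * ‖v‖ := by
    rw [norm_smul, Real.norm_eq_abs, abs_of_pos ht0]
  have hsmall : p.2 * ‖v‖ < ε / 2 := by
    have h3 : p.2 * ‖v‖ ≤ δ * ‖v‖ :=
      mul_le_mul_of_nonneg_right htδ.le (norm_nonneg v)
    have h4 : δ * (‖v‖ + 1) = ε / 2 := by
      rw [hδdef]; exact div_mul_cancel₀ _ (by positivity)
    nlinarith [norm_nonneg v]
  have hm1 : p.1 ∈ s := hball (Metric.mem_ball.mpr (by linarith))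
  have hm2 : p.1 + p.2 • v ∈ s := by
    apply hball
    rw [Metric.mem_ball]
    have hd : dist (p.1 + p.2 • v) p.1 = p.2 * ‖v‖ := by
      rw [dist_eq_norm, add_sub_cancel_left, hnv]
    calc dist (p.1 + p.2 • v) x ≤ dist (p.1 + p.2 • v) p.1 + dist p.1 x := dist_triangle _ _ _
      _ < ε := by rw [hd]; linarith
  have hlip : |f (p.1 + p.2 • v) - f p.1| ≤ K * (p.2 * ‖v‖) := by
    have := hK.dist_le_mul _ hm2 _ hm1
    rw [Real.dist_eq, dist_eq_norm, add_sub_cancel_left, hnv] at this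
    exact this
  rw [cq, abs_div, abs_of_pos ht0, div_le_iff₀ ht0]
  calc |f (p.1 + p.2 • v) - f p.1| ≤ K * (p.2 * ‖v‖) := hlip
    _ = K * ‖v‖ * p.2 := by ring

/-- packaging of boundedness facts -/
lemma bdd_package {β : Type*} {L : Filter β} [L.NeBot] {u : β → ℝ} {M : ℝ}
    (h : ∀ᶠ p in L, |u p| ≤ M) :
    IsBoundedUnder (· ≤ ·) L u ∧ IsBoundedUnder (· ≥ ·) L u ∧
      L.IsCoboundedUnder (· ≤ ·) u ∧ L.IsCoboundedUnder (· ≥ ·) u := by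
  have h1 : IsBoundedUnder (· ≤ ·) L u :=
    ⟨M, Filter.eventually_map.mpr (h.mono fun p hp => (abs_le.mp hp).2)⟩
  have h2 : IsBoundedUnder (· ≥ ·) L u :=
    ⟨-M, Filter.eventually_map.mpr (h.mono fun p hp => (abs_le.mp hp).1)⟩
  exact ⟨h1, h2, h2.isCoboundedUnder_le, h1.isCoboundedUnder_ge⟩

variable (f : E → ℝ) (x : E)

lemma clarkeDeriv_le_norm (hf : ∃ s ∈ nhds x, ∃ K : NNReal, LipschitzOnWith K f s) :
    ∃ K : ℝ, 0 ≤ K ∧ ∀ v : E, clarkeDeriv f x v ≤ K * ‖v‖ := by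
  obtain ⟨K, hK0, hK⟩ := cq_bound f x hf
  refine ⟨K, hK0, fun v => ?_⟩
  obtain ⟨-, -, hcb, -⟩ := bdd_package (hK v)
  rw [clarkeDeriv_eq]
  exact Filter.limsup_le_of_le hcb ((hK v).mono fun p hp => (abs_le.mp hp).2)

lemma clarkeDeriv_zero : clarkeDeriv f x (0 : E) = 0 := by
  rw [clarkeDeriv_eq]
  have : cq f (0 : E) = fun _ : E × ℝ => (0:ℝ) := by
    funext p; simp [cq]
  rw [this]
  exact Filter.limsup_const 0

/-- subadditivity of the Clarke derivative in the direction -/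
lemma clarkeDeriv_add_le (hf : ∃ s ∈ nhds x, ∃ K : NNReal, LipschitzOnWith K f s) (v w : E) :
    clarkeDeriv f x (v + w) ≤ clarkeDeriv f x v + clarkeDeriv f x w := by
  set L := (nhds x) ×ˢ (nhdsWithin (0:ℝ) (Set.Ioi 0)) with hL
  obtain ⟨K, hK0, hK⟩ := cq_bound f x hf
  obtain ⟨hbv, -, -, -⟩ := bdd_package (hK v)
  obtain ⟨hbw, -, -, -⟩ := bdd_package (hK w)
  obtain ⟨-, -, hcbvw, -⟩ := bdd_package (hK (v + w))
  -- the shifting map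
  have hψ : Filter.Tendsto (fun p : E × ℝ => (p.1 + p.2 • w, p.2)) L L := by
    apply Filter.Tendsto.prodMk
    · have h1 : Filter.Tendsto (fun p : E × ℝ => p.1) L (nhds x) := tendsto_fst
      have h2 : Filter.Tendsto (fun p : E × ℝ => p.2) L (nhds (0:ℝ)) :=
        tendsto_snd.mono_right nhdsWithin_le_nhds
      have := h1.add (h2.smul_const w)
      simpa using this
    · exact tendsto_snd
  apply le_of_forall_pos_le_add
  intro ε hε
  have hev : ∀ᶠ p in L, cq f v p < clarkeDeriv f x v + ε / 2 := by
    apply Filter.eventually_lt_of_limsup_lt _ hbv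
    rw [← clarkeDeriv_eq]; linarith
  have hevw : ∀ᶠ p in L, cq f w p < clarkeDeriv f x w + ε / 2 := by
    apply Filter.eventually_lt_of_limsup_lt _ hbw
    rw [← clarkeDeriv_eq]; linarith
  have hev' : ∀ᶠ p in L, cq f v (p.1 + p.2 • w, p.2) < clarkeDeriv f x v + ε / 2 :=
    hψ.eventually hev
  rw [clarkeDeriv_eq]
  apply Filter.limsup_le_of_le hcbvw
  filter_upwards [hev', hevw] with p h1 h2
  have hid : cq f (v + w) p = cq f v (p.1 + p.2 • w, p.2) + cq f w p := by
    simp only [cq]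
    have hpt : p.1 + p.2 • w + p.2 • v = p.1 + p.2 • (v + w) := by
      rw [smul_add]; abel
    rw [← add_div, sub_add_sub_cancel, hpt]
  rw [hid]; linarith

/-- scaling inequality -/
lemma clarkeDeriv_smul_le (hf : ∃ s ∈ nhds x, ∃ K : NNReal, LipschitzOnWith K f s)
    (v : E) {c : ℝ} (hc : 0 < c) :
    clarkeDeriv f x (c • v) ≤ c * clarkeDeriv f x v := by
  set L := (nhds x) ×ˢ (nhdsWithin (0:ℝ) (Set.Ioi 0)) with hL
  obtain ⟨K, hK0, hK⟩ := cq_bound f x hf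
  obtain ⟨hbv, -, -, -⟩ := bdd_package (hK v)
  obtain ⟨-, -, hcbcv, -⟩ := bdd_package (hK (c • v))
  have hψ : Filter.Tendsto (fun p : E × ℝ => (p.1, c * p.2)) L L := by
    apply Filter.Tendsto.prodMk tendsto_fst
    rw [tendsto_nhdsWithin_iff]
    constructor
    · have h2 : Filter.Tendsto (fun p : E × ℝ => p.2) L (nhds (0:ℝ)) :=
        tendsto_snd.mono_right nhdsWithin_le_nhds
      simpa using h2.const_mul c
    · have : ∀ᶠ t in nhdsWithin (0:ℝ) (Set.Ioi 0), t ∈ Set.Ioi (0:ℝ) :=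
        self_mem_nhdsWithin
      filter_upwards [tendsto_snd.eventually this] with p hp
      exact mul_pos hc hp
  apply le_of_forall_pos_le_add
  intro ε hε
  have hev : ∀ᶠ p in L, cq f v p < clarkeDeriv f x v + ε / c := by
    apply Filter.eventually_lt_of_limsup_lt _ hbv
    rw [← clarkeDeriv_eq]
    have : 0 < ε / c := div_pos hε hc
    linarith
  have hev' : ∀ᶠ p in L, cq f v (p.1, c * p.2) < clarkeDeriv f x v + ε / c :=
    hψ.eventually hev
  rw [clarkeDeriv_eq]
  apply Filter.limsup_le_of_le hcbcv
  filter_upwards [hev'] with p h1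
  have hid : cq f (c • v) p = c * cq f v (p.1, c * p.2) := by
    simp only [cq]
    have hpt : p.1 + (c * p.2) • v = p.1 + p.2 • (c • v) := by
      rw [smul_smul, mul_comm]
    rw [hpt, ← mul_div_assoc, mul_div_mul_left _ _ hc.ne']
  rw [hid]
  calc c * cq f v (p.1, c * p.2) ≤ c * (clarkeDeriv f x v + ε / c) :=
        mul_le_mul_of_nonneg_left h1.le hc.le
    _ = c * clarkeDeriv f x v + ε := by field_simp
    _ ≤ c * clarkeDeriv f x v + ε := le_refl _

/-- positive homogeneity -/
lemma clarkeDeriv_smul_eq (hf : ∃ s ∈ nhds x, ∃ K : NNReal, LipschitzOnWith K f s)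
    (v : E) {c : ℝ} (hc : 0 < c) :
    clarkeDeriv f x (c • v) = c * clarkeDeriv f x v := by
  have h1 := clarkeDeriv_smul_le f x hf v hc
  have h2 := clarkeDeriv_smul_le f x hf (c • v) (inv_pos.mpr hc)
  rw [smul_smul, inv_mul_cancel₀ hc.ne', one_smul] at h2
  have := mul_le_mul_of_nonneg_left h2 hc.le
  rw [← mul_assoc, mul_inv_cancel₀ hc.ne', one_mul] at this
  linarith

end Aux

section AuxInner

variable {E : Type*} [NormedAddCommGroup E] [InnerProductSpace ℝ E]
  [FiniteDimensional ℝ E]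

/-- Hahn–Banach attainment: every direction has a subgradient attaining the Clarke
derivative. -/
lemma exists_clarkeSubdiff_attain (f : E → ℝ) (x : E)
    (hf : ∃ s ∈ nhds x, ∃ K : NNReal, LipschitzOnWith K f s) (v : E) :
    ∃ ξ ∈ clarkeSubdiff f x, (inner ℝ ξ v : ℝ) = clarkeDeriv f x v := by
  set N : E → ℝ := clarkeDeriv f x with hN
  have hNzero : N 0 = 0 := clarkeDeriv_zero f x
  have hNadd : ∀ a b : E, N (a + b) ≤ N a + N b := clarkeDeriv_add_le f x hf
  have hNhom : ∀ c : ℝ, 0 < c → ∀ a : E, N (c • a) = c * N a := fun c hc a =>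
    clarkeDeriv_smul_eq f x hf a hc
  have hNneg : ∀ a : E, -N (-a) ≤ N a := by
    intro a
    have := hNadd a (-a)
    rw [add_neg_cancel, hNzero] at this
    linarith
  -- partial linear map on the span of v
  have Hv : ∀ c : ℝ, c • v = 0 → c • (N v) = 0 := by
    intro c hc
    rcases eq_or_ne c 0 with h | h
    · simp [h]
    · have hv0 : v = 0 := by
        have := congrArg (fun z => c⁻¹ • z) hc
        simpa [smul_smul, inv_mul_cancel₀ h] using this
      simp [hv0, hN, clarkeDeriv_zero f x, smul_eq_mul]
  set f₀ : E →ₗ.[ℝ] ℝ := LinearPMap.mkSpanSingleton' v (N v) Hv with hf₀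
  have hdom : ∀ z : f₀.domain, f₀ z ≤ N z := by
    rintro ⟨z, hz⟩
    have hz' : z ∈ Submodule.span ℝ {v} := by
      rwa [hf₀, LinearPMap.domain_mkSpanSingleton] at hz
    obtain ⟨c, hc⟩ := Submodule.mem_span_singleton.mp hz'
    have happ : f₀ ⟨z, hz⟩ = c • N v := by
      have : (⟨z, hz⟩ : f₀.domain) = ⟨c • v, hc ▸ hz⟩ := by
        apply Subtype.ext; exact hc.symm
      rw [this]
      exact LinearPMap.mkSpanSingleton'_apply v (N v) Hv c _
    rw [happ]
    have hzv : (⟨z, hz⟩ : f₀.domain).1 = c • v := hc.symm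
    rw [show ((⟨z, hz⟩ : f₀.domain) : E) = c • v from hzv]
    rcases lt_trichotomy c 0 with h | h | h
    · have h1 : N (c • v) = N ((-c) • (-v)) := by rw [neg_smul, smul_neg, neg_neg]
      have h2 : N ((-c) • (-v)) = (-c) * N (-v) := hNhom (-c) (by linarith) (-v)
      have h3 := hNneg v
      have : c • N v = c * N v := rfl
      rw [this, h1, h2]
      nlinarith
    · simp [h, hNzero]
    · rw [hNhom c h v]; rfl
  obtain ⟨g, hg1, hg2⟩ := exists_extension_of_le_sublinear f₀ N hNhom hNadd hdom
  have hgv : g v = N v := by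
    have hmem : v ∈ f₀.domain := by
      rw [hf₀, LinearPMap.domain_mkSpanSingleton]
      exact Submodule.mem_span_singleton_self v
    have := hg1 ⟨v, hmem⟩
    rw [this]
    exact LinearPMap.mkSpanSingleton'_apply_self v (N v) Hv hmem
  have hgc : Continuous g := g.continuous_of_finiteDimensional
  set G : E →L[ℝ] ℝ := ⟨g, hgc⟩ with hG
  set ξ : E := (InnerProductSpace.toDual ℝ E).symm G with hξ
  have hinner : ∀ w : E, (inner ℝ ξ w : ℝ) = g w := by
    intro w
    rw [hξ]
    exact InnerProductSpace.toDual_symm_apply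
  refine ⟨ξ, fun w => ?_, by rw [hinner v, hgv]⟩
  rw [hinner w]
  exact hg2 w

/-- the subdifferential is contained in a closed ball -/
lemma clarkeSubdiff_bounded (f : E → ℝ) (x : E)
    (hf : ∃ s ∈ nhds x, ∃ K : NNReal, LipschitzOnWith K f s) :
    ∃ R : ℝ, clarkeSubdiff f x ⊆ Metric.closedBall 0 R := by
  obtain ⟨K, hK0, hK⟩ := clarkeDeriv_le_norm f x hf
  refine ⟨K, fun ξ hξ => ?_⟩
  rw [Metric.mem_closedBall, dist_zero_right]
  have h1 : (inner ℝ ξ ξ : ℝ) ≤ K * ‖ξ‖ := le_trans (hξ ξ) (hK ξ)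
  rw [real_inner_self_eq_norm_sq] at h1
  nlinarith [norm_nonneg ξ]

lemma clarkeSubdiff_isClosed (f : E → ℝ) (x : E) : IsClosed (clarkeSubdiff f x) := by
  have : clarkeSubdiff f x = ⋂ v : E, {ξ : E | (inner ℝ ξ v : ℝ) ≤ clarkeDeriv f x v} := by
    ext ξ; simp [clarkeSubdiff, Set.mem_iInter]
  rw [this]
  refine isClosed_iInter fun v => isClosed_le ?_ continuous_const
  exact Continuous.inner continuous_id continuous_const

lemma clarkeSubdiff_convex (f : E → ℝ) (x : E) : Convex ℝ (clarkeSubdiff f x) := by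
  intro ξ hξ η hη a b ha hb hab
  intro v
  have h1 : (inner ℝ (a • ξ + b • η) v : ℝ) = a * inner ℝ ξ v + b * inner ℝ η v := by
    rw [inner_add_left, real_inner_smul_left, real_inner_smul_left]
  rw [h1]
  calc a * (inner ℝ ξ v : ℝ) + b * inner ℝ η v
      ≤ a * clarkeDeriv f x v + b * clarkeDeriv f x v :=
        add_le_add (mul_le_mul_of_nonneg_left (hξ v) ha)
          (mul_le_mul_of_nonneg_left (hη v) hb)
    _ = clarkeDeriv f x v := by rw [← add_mul, hab, one_mul]

lemma clarkeSubdiff_isCompact (f : E → ℝ) (x : E)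
    (hf : ∃ s ∈ nhds x, ∃ K : NNReal, LipschitzOnWith K f s) :
    IsCompact (clarkeSubdiff f x) := by
  obtain ⟨R, hR⟩ := clarkeSubdiff_bounded f x hf
  exact (isCompact_closedBall 0 R).of_isClosed_subset (clarkeSubdiff_isClosed f x) hR

end AuxInner

section ProductRule

variable {E : Type*} [NormedAddCommGroup E] [NormedSpace ℝ E]

/-- the key inequality for the product -/
lemma clarkeDeriv_mul_le (f g : E → ℝ) (x : E)
    (hf : ∃ s ∈ nhds x, ∃ K : NNReal, LipschitzOnWith K f s)
    (hg : ∃ s ∈ nhds x, ∃ K : NNReal, LipschitzOnWith K g s)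
    (hfx : 0 ≤ f x) (hgx : 0 ≤ g x) (v : E) :
    clarkeDeriv (fun y => f y * g y) x v
      ≤ g x * clarkeDeriv f x v + f x * clarkeDeriv g x v := by
  set L := (nhds x) ×ˢ (nhdsWithin (0:ℝ) (Set.Ioi 0)) with hL
  obtain ⟨Kf, hKf0, hKf⟩ := cq_bound f x hf
  obtain ⟨Kg, hKg0, hKg⟩ := cq_bound g x hg
  obtain ⟨hbf, -, -, -⟩ := bdd_package (hKf v)
  obtain ⟨hbg, -, -, -⟩ := bdd_package (hKg v)
  -- continuity facts
  have hcf : ContinuousAt f x := by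
    obtain ⟨s, hs, K, hK⟩ := hf
    exact (hK.continuousOn).continuousAt hs
  have hcg : ContinuousAt g x := by
    obtain ⟨s, hs, K, hK⟩ := hg
    exact (hK.continuousOn).continuousAt hs
  have hT : Filter.Tendsto (fun p : E × ℝ => p.1 + p.2 • v) L (nhds x) := by
    have h1 : Filter.Tendsto (fun p : E × ℝ => p.1) L (nhds x) := tendsto_fst
    have h2 : Filter.Tendsto (fun p : E × ℝ => p.2) L (nhds (0:ℝ)) :=
      tendsto_snd.mono_right nhdsWithin_le_nhds
    have := h1.add (h2.smul_const v)
    simpa using this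
  have hfa : Filter.Tendsto (fun p : E × ℝ => f (p.1 + p.2 • v)) L (nhds (f x)) :=
    hcf.tendsto.comp hT
  have hgy : Filter.Tendsto (fun p : E × ℝ => g p.1) L (nhds (g x)) :=
    hcg.tendsto.comp (tendsto_fst)
  -- pointwise identity
  have hid : ∀ p : E × ℝ, cq (fun y => f y * g y) v p
      = f (p.1 + p.2 • v) * cq g v p + g p.1 * cq f v p := by
    intro p
    simp only [cq]
    rw [mul_div_assoc', mul_div_assoc', ← add_div]
    congr 1
    ring
  -- coboundedness of the product quotient
  have hcb : L.IsCoboundedUnder (· ≤ ·) (cq (fun y => f y * g y) v) := by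
    have hevfa : ∀ᶠ p in L, |f (p.1 + p.2 • v)| ≤ |f x| + 1 := by
      have := hfa (Metric.ball_mem_nhds (f x) one_pos)
      filter_upwards [this] with p hp
      rw [Set.mem_preimage, Metric.mem_ball, Real.dist_eq] at hp
      have h1 : |f (p.1 + p.2 • v)| - |f x| ≤ |f (p.1 + p.2 • v) - f x| :=
        abs_sub_abs_le_abs_sub _ _
      linarith [hp.le]
    have hevgy : ∀ᶠ p in L, |g p.1| ≤ |g x| + 1 := by
      have := hgy (Metric.ball_mem_nhds (g x) one_pos)
      filter_upwards [this] with p hp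
      rw [Set.mem_preimage, Metric.mem_ball, Real.dist_eq] at hp
      have h1 : |g p.1| - |g x| ≤ |g p.1 - g x| := abs_sub_abs_le_abs_sub _ _
      linarith [hp.le]
    have hmain : ∀ᶠ p in L, |cq (fun y => f y * g y) v p|
        ≤ (|f x| + 1) * (Kg * ‖v‖) + (|g x| + 1) * (Kf * ‖v‖) := by
      filter_upwards [hevfa, hevgy, hKf v, hKg v] with p h1 h2 h3 h4
      rw [hid p]
      calc |f (p.1 + p.2 • v) * cq g v p + g p.1 * cq f v p|
          ≤ |f (p.1 + p.2 • v) * cq g v p| + |g p.1 * cq f v p| := abs_add_le _ _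
        _ = |f (p.1 + p.2 • v)| * |cq g v p| + |g p.1| * |cq f v p| := by
            rw [abs_mul, abs_mul]
        _ ≤ (|f x| + 1) * (Kg * ‖v‖) + (|g x| + 1) * (Kf * ‖v‖) := by
            apply add_le_add
            · exact mul_le_mul h1 h4 (abs_nonneg _) (by positivity)
            · exact mul_le_mul h2 h3 (abs_nonneg _) (by positivity)
    obtain ⟨-, -, hc, -⟩ := bdd_package hmain
    exact hc
  -- main estimate
  set A := clarkeDeriv f x v with hA
  set B := clarkeDeriv g x v with hB
  set C := f x + g x + Kf * ‖v‖ + Kg * ‖v‖ with hC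
  have hC0 : 0 ≤ C := by
    have h1 : 0 ≤ Kf * ‖v‖ := by positivity
    have h2 : 0 ≤ Kg * ‖v‖ := by positivity
    rw [hC]; linarith
  have key : ∀ ε : ℝ, 0 < ε →
      clarkeDeriv (fun y => f y * g y) x v ≤ g x * A + f x * B + ε * C := by
    intro ε hε
    have e1 : ∀ᶠ p in L, cq f v p < A + ε := by
      apply Filter.eventually_lt_of_limsup_lt _ hbf
      rw [← clarkeDeriv_eq, ← hA]; linarith
    have e2 : ∀ᶠ p in L, cq g v p < B + ε := by
      apply Filter.eventually_lt_of_limsup_lt _ hbg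
      rw [← clarkeDeriv_eq, ← hB]; linarith
    have e5 : ∀ᶠ p in L, |f (p.1 + p.2 • v) - f x| ≤ ε := by
      have := hfa (Metric.ball_mem_nhds (f x) hε)
      filter_upwards [this] with p hp
      rw [Set.mem_preimage, Metric.mem_ball, Real.dist_eq] at hp
      exact hp.le
    have e6 : ∀ᶠ p in L, |g p.1 - g x| ≤ ε := by
      have := hgy (Metric.ball_mem_nhds (g x) hε)
      filter_upwards [this] with p hp
      rw [Set.mem_preimage, Metric.mem_ball, Real.dist_eq] at hp
      exact hp.le
    rw [clarkeDeriv_eq]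
    apply Filter.limsup_le_of_le hcb
    filter_upwards [e1, e2, e5, e6, hKf v, hKg v] with p h1 h2 h5 h6 h3 h4
    rw [hid p]
    have t1 : f (p.1 + p.2 • v) * cq g v p ≤ f x * (B + ε) + ε * (Kg * ‖v‖) := by
      have hsplit : f (p.1 + p.2 • v) * cq g v p
          = f x * cq g v p + (f (p.1 + p.2 • v) - f x) * cq g v p := by ring
      rw [hsplit]
      have hh1 : f x * cq g v p ≤ f x * (B + ε) := mul_le_mul_of_nonneg_left h2.le hfx
      have hh2 : (f (p.1 + p.2 • v) - f x) * cq g v p ≤ ε * (Kg * ‖v‖) := by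
        calc (f (p.1 + p.2 • v) - f x) * cq g v p
            ≤ |(f (p.1 + p.2 • v) - f x) * cq g v p| := le_abs_self _
          _ = |f (p.1 + p.2 • v) - f x| * |cq g v p| := abs_mul _ _
          _ ≤ ε * (Kg * ‖v‖) := mul_le_mul h5 h4 (abs_nonneg _) hε.le
      linarith
    have t2 : g p.1 * cq f v p ≤ g x * (A + ε) + ε * (Kf * ‖v‖) := by
      have hsplit : g p.1 * cq f v p
          = g x * cq f v p + (g p.1 - g x) * cq f v p := by ring
      rw [hsplit]
      have hh1 : g x * cq f v p ≤ g x * (A + ε) := mul_le_mul_of_nonneg_left h1.le hgx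
      have hh2 : (g p.1 - g x) * cq f v p ≤ ε * (Kf * ‖v‖) := by
        calc (g p.1 - g x) * cq f v p
            ≤ |(g p.1 - g x) * cq f v p| := le_abs_self _
          _ = |g p.1 - g x| * |cq f v p| := abs_mul _ _
          _ ≤ ε * (Kf * ‖v‖) := mul_le_mul h6 h3 (abs_nonneg _) hε.le
      linarith
    have hCexp : ε * C = ε * f x + ε * g x + ε * (Kf * ‖v‖) + ε * (Kg * ‖v‖) := by
      rw [hC]; ring
    nlinarith
  apply le_of_forall_pos_le_add
  intro ε hε
  have hkey := key (ε / (C + 1)) (by positivity)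
  have h2 : (ε / (C + 1)) * C ≤ ε := by
    rw [div_mul_eq_mul_div, div_le_iff₀ (by linarith)]
    nlinarith
  linarith

end ProductRule

theorem stmt18 {n : ℕ} (f g : EuclideanSpace ℝ (Fin n) → ℝ) (x : EuclideanSpace ℝ (Fin n))
    (hf : ∃ s ∈ nhds x, ∃ K : NNReal, LipschitzOnWith K f s)
    (hg : ∃ s ∈ nhds x, ∃ K : NNReal, LipschitzOnWith K g s)
    (hfx : 0 ≤ f x) (hgx : 0 ≤ g x) :
    clarkeSubdiff (fun y => f y * g y) x ⊆
      g x • clarkeSubdiff f x + f x • clarkeSubdiff g x := by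
  intro ξ hξ
  set Sf := clarkeSubdiff f x with hSf
  set Sg := clarkeSubdiff g x with hSg
  have hcompf := clarkeSubdiff_isCompact f x hf
  have hcompg := clarkeSubdiff_isCompact g x hg
  have hcompact : IsCompact (g x • Sf + f x • Sg) := by
    apply IsCompact.add
    · rw [← Set.image_smul]; exact hcompf.image (continuous_const_smul _)
    · rw [← Set.image_smul]; exact hcompg.image (continuous_const_smul _)
  have hconv : Convex ℝ (g x • Sf + f x • Sg) :=
    ((clarkeSubdiff_convex f x).smul _).add ((clarkeSubdiff_convex g x).smul _)
  by_contra h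
  obtain ⟨l, u, hlS, hlξ⟩ := geometric_hahn_banach_closed_point hconv hcompact.isClosed h
  set w : EuclideanSpace ℝ (Fin n) := (InnerProductSpace.toDual ℝ _).symm l with hw
  have hwl : ∀ z, (inner ℝ w z : ℝ) = l z := fun z => InnerProductSpace.toDual_symm_apply
  obtain ⟨a, ha, hav⟩ := exists_clarkeSubdiff_attain f x hf w
  obtain ⟨b, hb, hbv⟩ := exists_clarkeSubdiff_attain g x hg w
  have hmem : g x • a + f x • b ∈ g x • Sf + f x • Sg :=
    Set.add_mem_add (Set.smul_mem_smul_set ha) (Set.smul_mem_smul_set hb)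
  have hlaw : l a = clarkeDeriv f x w := by
    rw [← hwl a, real_inner_comm]; exact hav
  have hlbw : l b = clarkeDeriv g x w := by
    rw [← hwl b, real_inner_comm]; exact hbv
  have h1 : l ξ ≤ l (g x • a + f x • b) := by
    have hlin : l (g x • a + f x • b) = g x * l a + f x * l b := by
      rw [map_add, map_smul, map_smul, smul_eq_mul, smul_eq_mul]
    have hξw : (inner ℝ ξ w : ℝ) ≤ clarkeDeriv (fun y => f y * g y) x w := hξ w
    have hmul := clarkeDeriv_mul_le f g x hf hg hfx hgx w
    have hlξw : l ξ = (inner ℝ ξ w : ℝ) := by rw [← hwl ξ, real_inner_comm]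
    rw [hlin, hlaw, hlbw, hlξw]
    linarith
  linarith [hlS _ hmem]
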